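/- Let b ∈ ℤ, b ≠ 0, and t ∈ ℂ. Define W_t(x,y) = (y² − x)(x − b²) + (t² − 2bt)(y − b)², and define rational functions ψ_{1,t}(w) = −(4wt² − 8wtb − b² + 2b²w − b²w²)/(w+1)² and ψ_{2,t}(w) = −(4wt² − 8wtb + bt − 2b² − bw²t + 2b²w)/((wt − t + 2b)(w+1)). Then W_t(ψ_{1,t}(w), ψ_{2,t}(w)) = 0 identically in w (wherever defined), ψ_{1,t}(w) = ψ_{1,t}(1/w), ψ_{1,t}(0) = b², and ψ_{2,t}(0) = b. -/

import Mathlib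

/-- The curve W_t(x,y) = (y²−x)(x−b²) + (t²−2bt)(y−b)². -/
noncomputable def Wcurve (b : ℤ) (t x y : ℂ) : ℂ :=
  (y ^ 2 - x) * (x - (b : ℂ) ^ 2) + (t ^ 2 - 2 * (b : ℂ) * t) * (y - (b : ℂ)) ^ 2

/-- First component of the normalization map. -/
noncomputable def psi1 (b : ℤ) (t w : ℂ) : ℂ :=
  -(4 * w * t ^ 2 - 8 * w * t * (b : ℂ) - (b : ℂ) ^ 2 + 2 * (b : ℂ) ^ 2 * w
      - (b : ℂ) ^ 2 * w ^ 2) / ((w + 1) ^ 2)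

/-- Second component of the normalization map. -/
noncomputable def psi2 (b : ℤ) (t w : ℂ) : ℂ :=
  -(4 * w * t ^ 2 - 8 * w * t * (b : ℂ) + (b : ℂ) * t - 2 * (b : ℂ) ^ 2
      - (b : ℂ) * w ^ 2 * t + 2 * (b : ℂ) ^ 2 * w) / ((w * t - t + 2 * (b : ℂ)) * (w + 1))

/-- §4.5: ψ_t = (ψ_{1,t}, ψ_{2,t}) parameterizes the curve {W_t = 0} (wherever defined),
ψ_{1,t}(w) = ψ_{1,t}(1/w), ψ_{1,t}(0) = b², and ψ_{2,t}(0) = b. -/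
theorem stmt_10 (b : ℤ) (hb : b ≠ 0) (t : ℂ) :
    (∀ w : ℂ, w + 1 ≠ 0 → w * t - t + 2 * (b : ℂ) ≠ 0 →
      Wcurve b t (psi1 b t w) (psi2 b t w) = 0) ∧
    (∀ w : ℂ, w ≠ 0 → psi1 b t w = psi1 b t (1 / w)) ∧
    psi1 b t 0 = (b : ℂ) ^ 2 ∧
    (2 * (b : ℂ) - t ≠ 0 → psi2 b t 0 = (b : ℂ)) := by
  refine ⟨?_, ?_, ?_, ?_⟩
  · intro w h1 h2
    unfold Wcurve psi1 psi2
    have h3 : t * (w - 1) + (b : ℂ) * 2 ≠ 0 := by intro hc; apply h2; linear_combination hc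
    field_simp
    ring
  · intro w hw
    unfold psi1
    rcases eq_or_ne (w + 1) 0 with h | h
    · have hw1 : w = -1 := by linear_combination h
      rw [hw1]; norm_num
    · have h2 : 1 / w + 1 ≠ 0 := by
        intro hc
        apply h
        have : 1 + w = 0 := by
          field_simp at hc
          linear_combination hc
        linear_combination this
      rw [div_eq_div_iff (pow_ne_zero 2 h) (pow_ne_zero 2 h2)]
      field_simp
      ring
  · unfold psi1; norm_num
  · intro h
    unfold psi2
    have : (0 * t - t + 2 * (b : ℂ)) = 2 * (b : ℂ) - t := by ring
    rw [this]
    rw [div_eq_iff (mul_ne_zero h (by norm_num))]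
    ring
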